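/- Let A = O[SL(2,3)] where O is a complete DVR with residue field of characteristic 2 and fraction field K large enough to split A, and let e(χᵢ) ∈ K⊗A be the central primitive idempotents corresponding to the irreducible characters χ₀,...,χ₆ (labeled per the character table, degrees 1,1,1,3,2,2,2). Then s = 2e(χ₄)+2e(χ₅)+2e(χ₆), z₀ = 4e(χ₂)+4e(χ₃)+2e(χ₄), z₁ = 4e(χ₁)+4e(χ₃)+2e(χ₅), and z₂ = 4e(χ₀)+4e(χ₃)+2e(χ₆) all lie in A (equivalently in Z(A)). -/

import Mathlib

open IsLocalRing

noncomputable section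

@[simp] lemma my_cons_val_five {α : Type*} {m : ℕ} (x : α) (u : Fin m.succ.succ.succ.succ.succ → α) :
    Matrix.vecCons x u 5 =
      Matrix.vecHead (Matrix.vecTail (Matrix.vecTail (Matrix.vecTail (Matrix.vecTail u)))) :=
  rfl

@[simp] lemma my_cons_val_six {α : Type*} {m : ℕ}
    (x : α) (u : Fin m.succ.succ.succ.succ.succ.succ → α) :
    Matrix.vecCons x u 6 =
      Matrix.vecHead (Matrix.vecTail (Matrix.vecTail (Matrix.vecTail (Matrix.vecTail
        (Matrix.vecTail u))))) :=
  rfl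

/-- The binary tetrahedral group `SL(2,3) ≅ Q₈ ⋊ C₃`. -/
abbrev Gsl : Type := Matrix.SpecialLinearGroup (Fin 2) (ZMod 3)

/-- The character table of `SL(2,3)`. -/
def tbl (O : Type*) [CommRing O] (ω : O) : Fin 7 → Fin 7 → O :=
  ![![1, 1, 1, 1, 1, 1, 1],
    ![1, 1, 1, ω, ω^2, ω, ω^2],
    ![1, 1, 1, ω^2, ω, ω^2, ω],
    ![3, 3, -1, 0, 0, 0, 0],
    ![2, -2, 0, -ω^2, -ω, ω^2, ω],
    ![2, -2, 0, -ω, -ω^2, ω, ω^2],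
    ![2, -2, 0, -1, -1, 1, 1]]

lemma tbl_0_0 {R : Type*} [CommRing R] (ω : R) (h : 0 < 7) :
    tbl R ω 0 ⟨0, h⟩ = 1 := rfl

lemma tbl_0_1 {R : Type*} [CommRing R] (ω : R) (h : 1 < 7) :
    tbl R ω 0 ⟨1, h⟩ = 1 := rfl

lemma tbl_0_2 {R : Type*} [CommRing R] (ω : R) (h : 2 < 7) :
    tbl R ω 0 ⟨2, h⟩ = 1 := rfl

lemma tbl_0_3 {R : Type*} [CommRing R] (ω : R) (h : 3 < 7) :
    tbl R ω 0 ⟨3, h⟩ = 1 := rfl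

lemma tbl_0_4 {R : Type*} [CommRing R] (ω : R) (h : 4 < 7) :
    tbl R ω 0 ⟨4, h⟩ = 1 := rfl

lemma tbl_0_5 {R : Type*} [CommRing R] (ω : R) (h : 5 < 7) :
    tbl R ω 0 ⟨5, h⟩ = 1 := rfl

lemma tbl_0_6 {R : Type*} [CommRing R] (ω : R) (h : 6 < 7) :
    tbl R ω 0 ⟨6, h⟩ = 1 := rfl

lemma tbl_0_z {R : Type*} [CommRing R] (ω : R) : tbl R ω 0 0 = 1 := rfl

lemma tbl_1_0 {R : Type*} [CommRing R] (ω : R) (h : 0 < 7) :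
    tbl R ω 1 ⟨0, h⟩ = 1 := rfl

lemma tbl_1_1 {R : Type*} [CommRing R] (ω : R) (h : 1 < 7) :
    tbl R ω 1 ⟨1, h⟩ = 1 := rfl

lemma tbl_1_2 {R : Type*} [CommRing R] (ω : R) (h : 2 < 7) :
    tbl R ω 1 ⟨2, h⟩ = 1 := rfl

lemma tbl_1_3 {R : Type*} [CommRing R] (ω : R) (h : 3 < 7) :
    tbl R ω 1 ⟨3, h⟩ = ω := rfl

lemma tbl_1_4 {R : Type*} [CommRing R] (ω : R) (h : 4 < 7) :
    tbl R ω 1 ⟨4, h⟩ = ω^2 := rfl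

lemma tbl_1_5 {R : Type*} [CommRing R] (ω : R) (h : 5 < 7) :
    tbl R ω 1 ⟨5, h⟩ = ω := rfl

lemma tbl_1_6 {R : Type*} [CommRing R] (ω : R) (h : 6 < 7) :
    tbl R ω 1 ⟨6, h⟩ = ω^2 := rfl

lemma tbl_1_z {R : Type*} [CommRing R] (ω : R) : tbl R ω 1 0 = 1 := rfl

lemma tbl_2_0 {R : Type*} [CommRing R] (ω : R) (h : 0 < 7) :
    tbl R ω 2 ⟨0, h⟩ = 1 := rfl

lemma tbl_2_1 {R : Type*} [CommRing R] (ω : R) (h : 1 < 7) :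
    tbl R ω 2 ⟨1, h⟩ = 1 := rfl

lemma tbl_2_2 {R : Type*} [CommRing R] (ω : R) (h : 2 < 7) :
    tbl R ω 2 ⟨2, h⟩ = 1 := rfl

lemma tbl_2_3 {R : Type*} [CommRing R] (ω : R) (h : 3 < 7) :
    tbl R ω 2 ⟨3, h⟩ = ω^2 := rfl

lemma tbl_2_4 {R : Type*} [CommRing R] (ω : R) (h : 4 < 7) :
    tbl R ω 2 ⟨4, h⟩ = ω := rfl

lemma tbl_2_5 {R : Type*} [CommRing R] (ω : R) (h : 5 < 7) :
    tbl R ω 2 ⟨5, h⟩ = ω^2 := rfl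

lemma tbl_2_6 {R : Type*} [CommRing R] (ω : R) (h : 6 < 7) :
    tbl R ω 2 ⟨6, h⟩ = ω := rfl

lemma tbl_2_z {R : Type*} [CommRing R] (ω : R) : tbl R ω 2 0 = 1 := rfl

lemma tbl_3_0 {R : Type*} [CommRing R] (ω : R) (h : 0 < 7) :
    tbl R ω 3 ⟨0, h⟩ = 3 := rfl

lemma tbl_3_1 {R : Type*} [CommRing R] (ω : R) (h : 1 < 7) :
    tbl R ω 3 ⟨1, h⟩ = 3 := rfl

lemma tbl_3_2 {R : Type*} [CommRing R] (ω : R) (h : 2 < 7) :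
    tbl R ω 3 ⟨2, h⟩ = -1 := rfl

lemma tbl_3_3 {R : Type*} [CommRing R] (ω : R) (h : 3 < 7) :
    tbl R ω 3 ⟨3, h⟩ = 0 := rfl

lemma tbl_3_4 {R : Type*} [CommRing R] (ω : R) (h : 4 < 7) :
    tbl R ω 3 ⟨4, h⟩ = 0 := rfl

lemma tbl_3_5 {R : Type*} [CommRing R] (ω : R) (h : 5 < 7) :
    tbl R ω 3 ⟨5, h⟩ = 0 := rfl

lemma tbl_3_6 {R : Type*} [CommRing R] (ω : R) (h : 6 < 7) :
    tbl R ω 3 ⟨6, h⟩ = 0 := rfl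

lemma tbl_3_z {R : Type*} [CommRing R] (ω : R) : tbl R ω 3 0 = 3 := rfl

lemma tbl_4_0 {R : Type*} [CommRing R] (ω : R) (h : 0 < 7) :
    tbl R ω 4 ⟨0, h⟩ = 2 := rfl

lemma tbl_4_1 {R : Type*} [CommRing R] (ω : R) (h : 1 < 7) :
    tbl R ω 4 ⟨1, h⟩ = -2 := rfl

lemma tbl_4_2 {R : Type*} [CommRing R] (ω : R) (h : 2 < 7) :
    tbl R ω 4 ⟨2, h⟩ = 0 := rfl

lemma tbl_4_3 {R : Type*} [CommRing R] (ω : R) (h : 3 < 7) :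
    tbl R ω 4 ⟨3, h⟩ = -ω^2 := rfl

lemma tbl_4_4 {R : Type*} [CommRing R] (ω : R) (h : 4 < 7) :
    tbl R ω 4 ⟨4, h⟩ = -ω := rfl

lemma tbl_4_5 {R : Type*} [CommRing R] (ω : R) (h : 5 < 7) :
    tbl R ω 4 ⟨5, h⟩ = ω^2 := rfl

lemma tbl_4_6 {R : Type*} [CommRing R] (ω : R) (h : 6 < 7) :
    tbl R ω 4 ⟨6, h⟩ = ω := rfl

lemma tbl_4_z {R : Type*} [CommRing R] (ω : R) : tbl R ω 4 0 = 2 := rfl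

lemma tbl_5_0 {R : Type*} [CommRing R] (ω : R) (h : 0 < 7) :
    tbl R ω 5 ⟨0, h⟩ = 2 := rfl

lemma tbl_5_1 {R : Type*} [CommRing R] (ω : R) (h : 1 < 7) :
    tbl R ω 5 ⟨1, h⟩ = -2 := rfl

lemma tbl_5_2 {R : Type*} [CommRing R] (ω : R) (h : 2 < 7) :
    tbl R ω 5 ⟨2, h⟩ = 0 := rfl

lemma tbl_5_3 {R : Type*} [CommRing R] (ω : R) (h : 3 < 7) :
    tbl R ω 5 ⟨3, h⟩ = -ω := rfl

lemma tbl_5_4 {R : Type*} [CommRing R] (ω : R) (h : 4 < 7) :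
    tbl R ω 5 ⟨4, h⟩ = -ω^2 := rfl

lemma tbl_5_5 {R : Type*} [CommRing R] (ω : R) (h : 5 < 7) :
    tbl R ω 5 ⟨5, h⟩ = ω := rfl

lemma tbl_5_6 {R : Type*} [CommRing R] (ω : R) (h : 6 < 7) :
    tbl R ω 5 ⟨6, h⟩ = ω^2 := rfl

lemma tbl_5_z {R : Type*} [CommRing R] (ω : R) : tbl R ω 5 0 = 2 := rfl

lemma tbl_6_0 {R : Type*} [CommRing R] (ω : R) (h : 0 < 7) :
    tbl R ω 6 ⟨0, h⟩ = 2 := rfl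

lemma tbl_6_1 {R : Type*} [CommRing R] (ω : R) (h : 1 < 7) :
    tbl R ω 6 ⟨1, h⟩ = -2 := rfl

lemma tbl_6_2 {R : Type*} [CommRing R] (ω : R) (h : 2 < 7) :
    tbl R ω 6 ⟨2, h⟩ = 0 := rfl

lemma tbl_6_3 {R : Type*} [CommRing R] (ω : R) (h : 3 < 7) :
    tbl R ω 6 ⟨3, h⟩ = -1 := rfl

lemma tbl_6_4 {R : Type*} [CommRing R] (ω : R) (h : 4 < 7) :
    tbl R ω 6 ⟨4, h⟩ = -1 := rfl

lemma tbl_6_5 {R : Type*} [CommRing R] (ω : R) (h : 5 < 7) :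
    tbl R ω 6 ⟨5, h⟩ = 1 := rfl

lemma tbl_6_6 {R : Type*} [CommRing R] (ω : R) (h : 6 < 7) :
    tbl R ω 6 ⟨6, h⟩ = 1 := rfl

lemma tbl_6_z {R : Type*} [CommRing R] (ω : R) : tbl R ω 6 0 = 2 := rfl


/-- Representatives `1, z, y, t, t², tz, t²z` of the conjugacy classes of `SL(2,3)`. -/
def reps (y t : Gsl) : Fin 7 → Gsl := ![1, y^2, y, t, t^2, t * y^2, t^2 * y^2]

/-- The central primitive idempotent `e(χ) = (χ(1)/|G|) ∑_{x∈G} χ(x⁻¹) x` of `KG`. -/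
def cIdem (K : Type*) [Field K] (χ : Gsl → K) : MonoidAlgebra K Gsl :=
  (χ 1 / (Fintype.card Gsl : K)) • ∑ x : Gsl, MonoidAlgebra.single x (χ x⁻¹)

lemma card_gsl : Fintype.card Gsl = 24 := by decide

lemma ma_add_apply {K : Type*} [Field K] (f g : MonoidAlgebra K Gsl) (x : Gsl) :
    (f + g).coeff x = f.coeff x + g.coeff x := rfl

lemma ma_smul_apply {K : Type*} [Field K] (c : K) (f : MonoidAlgebra K Gsl) (x : Gsl) :
    (c • f).coeff x = c * f.coeff x := rfl

theorem stmt_12 (O : Type*) [CommRing O] [IsDomain O] [IsDiscreteValuationRing O]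
    [CharZero O] [IsAdicComplete (maximalIdeal O) O] (h2 : ¬ IsUnit (2 : O))
    (ω : FractionRing O) (hω : ω ^ 2 + ω + 1 = 0)
    (y t : Gsl) (hy : orderOf y = 4) (ht : orderOf t = 3)
    (η : Fin 7 → Gsl → FractionRing O)
    (hclass : ∀ i (g h : Gsl), IsConj g h → η i g = η i h)
    (hval : ∀ i j, η i (reps y t j) = tbl (FractionRing O) ω i j)
    (hfull : ∀ g : Gsl, ∃ j, IsConj (reps y t j) g) :
    let K := FractionRing O
    let E : Fin 7 → MonoidAlgebra K Gsl := fun m => cIdem K (η m)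
    (∀ g : Gsl, ((2 : K) • E 4 + (2 : K) • E 5 + (2 : K) • E 6).coeff g ∈
        (algebraMap O K).range) ∧
    (∀ g : Gsl, ((4 : K) • E 2 + (4 : K) • E 3 + (2 : K) • E 4).coeff g ∈
        (algebraMap O K).range) ∧
    (∀ g : Gsl, ((4 : K) • E 1 + (4 : K) • E 3 + (2 : K) • E 5).coeff g ∈
        (algebraMap O K).range) ∧
    (∀ g : Gsl, ((4 : K) • E 0 + (4 : K) • E 3 + (2 : K) • E 6).coeff g ∈
        (algebraMap O K).range) := by
  intro K E
  -- 3 is a unit in O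
  have h3 : IsUnit (3 : O) := by
    by_contra h3
    have h2m : (2 : O) ∈ maximalIdeal O := h2
    have h3m : (3 : O) ∈ maximalIdeal O := h3
    have h := (maximalIdeal O).sub_mem h3m h2m
    rw [show (3 : O) - 2 = 1 by norm_num] at h
    exact h isUnit_one
  obtain ⟨c3, hc3⟩ : ∃ c : O, (3 : O) * c = 1 := by
    obtain ⟨u, hu⟩ := h3
    exact ⟨↑u⁻¹, by rw [← hu]; exact u.mul_inv⟩
  have hc3K : algebraMap O K c3 = 1 / 3 := by
    have h3K : (3 : K) * algebraMap O K c3 = 1 := by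
      rw [← map_ofNat (algebraMap O K) 3, ← map_mul, hc3, map_one]
    have h3ne : (3 : K) ≠ 0 := fun h => by simp [h] at h3K
    rw [eq_div_iff h3ne]
    linear_combination h3K
  -- ω is integral over O, hence in the image of O
  obtain ⟨w, hw⟩ : ∃ a : O, algebraMap O K a = ω := by
    refine IsIntegrallyClosed.isIntegral_iff.mp ⟨Polynomial.X ^ 2 + Polynomial.X + 1, ?_, ?_⟩
    · monicity!
    · simpa using hω
  -- coefficients of the idempotents
  have happly : ∀ (χ : Gsl → K) (g : Gsl),
      ((∑ x : Gsl, MonoidAlgebra.single x (χ x⁻¹)).coeff g) = χ g⁻¹ := by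
    intro χ g
    rw [MonoidAlgebra.coeff_sum, Finset.sum_apply']
    rw [Finset.sum_eq_single g (fun b _ hb => by
      simp [MonoidAlgebra.coeff_single, Finsupp.single_apply, hb]) (by simp)]
    simp [MonoidAlgebra.coeff_single]
  have hE : ∀ (m : Fin 7) (g : Gsl), (E m).coeff g = η m 1 / 24 * η m g⁻¹ := by
    intro m g
    show (cIdem K (η m)).coeff g = _
    rw [cIdem, MonoidAlgebra.coeff_smul_apply, happly, smul_eq_mul, card_gsl]
    norm_num
  have key : ∀ (a b c : ℤ) (v : K), v = ((a : K) + b * ω + c * ω ^ 2) / 3 →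
      v ∈ (algebraMap O K).range := by
    rintro a b c v rfl
    refine ⟨(a + b * w + c * w ^ 2) * c3, ?_⟩
    push_cast [map_mul, map_add, map_pow, map_intCast, hw, hc3K]
    ring
  have hη1 : ∀ m, η m 1 = tbl K ω m 0 := fun m => by
    have h := hval m 0; simpa [reps] using h
  refine ⟨?_, ?_, ?_, ?_⟩ <;> intro g <;>
    obtain ⟨j, hj⟩ := hfull g⁻¹ <;>
    have hη : ∀ m, η m g⁻¹ = tbl K ω m j := fun m => (hclass m _ _ hj).symm.trans (hval m j) <;>
    simp only [ma_add_apply, ma_smul_apply, hE, hη, hη1] <;>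
    fin_cases j <;>
    simp only [tbl_0_0, tbl_0_1, tbl_0_2, tbl_0_3, tbl_0_4, tbl_0_5, tbl_0_6, tbl_0_z, tbl_1_0, tbl_1_1, tbl_1_2, tbl_1_3, tbl_1_4, tbl_1_5, tbl_1_6, tbl_1_z, tbl_2_0, tbl_2_1, tbl_2_2, tbl_2_3, tbl_2_4, tbl_2_5, tbl_2_6, tbl_2_z, tbl_3_0, tbl_3_1, tbl_3_2, tbl_3_3, tbl_3_4, tbl_3_5, tbl_3_6, tbl_3_z, tbl_4_0, tbl_4_1, tbl_4_2, tbl_4_3, tbl_4_4, tbl_4_5, tbl_4_6, tbl_4_z, tbl_5_0, tbl_5_1, tbl_5_2, tbl_5_3, tbl_5_4, tbl_5_5, tbl_5_6, tbl_5_z, tbl_6_0, tbl_6_1, tbl_6_2, tbl_6_3, tbl_6_4, tbl_6_5, tbl_6_6, tbl_6_z]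
  · exact key 3 0 0 _ (by push_cast; ring)
  · exact key (-3) 0 0 _ (by push_cast; ring)
  · exact key 0 0 0 _ (by push_cast; ring)
  · exact key 0 0 0 _ (by push_cast; linear_combination (-(1/6) : K) * hω)
  · exact key 0 0 0 _ (by push_cast; linear_combination (-(1/6) : K) * hω)
  · exact key 0 0 0 _ (by push_cast; linear_combination ((1/6) : K) * hω)
  · exact key 0 0 0 _ (by push_cast; linear_combination ((1/6) : K) * hω)
  · exact key 6 0 0 _ (by push_cast; ring)
  · exact key 4 0 0 _ (by push_cast; ring)
  · exact key (-1) 0 0 _ (by push_cast; ring)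
  · exact key 0 0 0 _ (by push_cast; ring)
  · exact key 0 0 0 _ (by push_cast; ring)
  · exact key 0 0 1 _ (by push_cast; ring)
  · exact key 0 1 0 _ (by push_cast; ring)
  · exact key 6 0 0 _ (by push_cast; ring)
  · exact key 4 0 0 _ (by push_cast; ring)
  · exact key (-1) 0 0 _ (by push_cast; ring)
  · exact key 0 0 0 _ (by push_cast; ring)
  · exact key 0 0 0 _ (by push_cast; ring)
  · exact key 0 1 0 _ (by push_cast; ring)
  · exact key 0 0 1 _ (by push_cast; ring)
  · exact key 6 0 0 _ (by push_cast; ring)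
  · exact key 4 0 0 _ (by push_cast; ring)
  · exact key (-1) 0 0 _ (by push_cast; ring)
  · exact key 0 0 0 _ (by push_cast; ring)
  · exact key 0 0 0 _ (by push_cast; ring)
  · exact key 1 0 0 _ (by push_cast; ring)
  · exact key 1 0 0 _ (by push_cast; ring)

end
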